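/- arXiv:1809.09660 — 2 statements merged into one kernel-verified Lean document; each statement's English description precedes it below -/
import Mathlib

section
/- Let (X,μ) be a standard Borel probability space, R a standard Borel equivalence relation on X, and A ⊂ X a measurable subset with μ(A) > 0. Then cost_{μ|_A}(R|_A) ≤ cost_μ(R). -/
open MeasureTheory ENNReal

namespace Paper

/-- A partial measurable isomorphism whose graph is contained in the relation `r`
(an element of the pseudo-full group `⟦r⟧`). -/
structure PartialIso (X : Type*) [MeasurableSpace X] (r : X → X → Prop) where
  dom : Set X
  toFun : X → X
  dom_meas : MeasurableSet dom
  meas : Measurable toFun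
  injOn : Set.InjOn toFun dom
  image_meas : MeasurableSet (toFun '' dom)
  mem_rel : ∀ x ∈ dom, r x (toFun x)

/-- A (countable) family of partial isomorphisms is a graphing of `r` if the equivalence
relation it generates is exactly `r`. -/
def IsGraphing {X : Type*} [MeasurableSpace X] {r : X → X → Prop}
    (Φ : ℕ → PartialIso X r) : Prop :=
  ∀ x y, r x y ↔
    Relation.EqvGen (fun a b => ∃ i, a ∈ (Φ i).dom ∧ b = (Φ i).toFun a) x y

/-- The cost of a relation `r` on a measure space: the infimum over graphings of the
sum of the measures of the domains. -/
noncomputable def cost {X : Type*} [MeasurableSpace X] (μ : Measure X)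
    (r : X → X → Prop) : ℝ≥0∞ :=
  ⨅ Φ : {Φ : ℕ → PartialIso X r // IsGraphing Φ}, ∑' i, μ ((Φ.1 i).dom)

/-- A standard equivalence relation: measurable, countable classes, and all measurable
automorphisms preserving the classes preserve the measure. -/
structure IsStdEqRel {X : Type*} [MeasurableSpace X] (μ : Measure X)
    (r : X → X → Prop) : Prop where
  equivalence : Equivalence r
  measurableSet_rel : MeasurableSet {p : X × X | r p.1 p.2}
  countable_classes : ∀ x, {y | r x y}.Countable
  fullGroup_measurePreserving :
    ∀ f : X ≃ᵐ X, (∀ x y, r x y → r (f x) (f y)) → MeasurePreserving f μ μ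

/-- A set is invariant under a relation. -/
def IsInvariant {X : Type*} (r : X → X → Prop) (A : Set X) : Prop :=
  ∀ x ∈ A, ∀ y, r x y → y ∈ A

/-- A complete section: every orbit meets the set. -/
def IsCompleteSection {X : Type*} (r : X → X → Prop) (A : Set X) : Prop :=
  ∀ x : X, ∃ y ∈ A, r x y

/-- A relation is aperiodic if almost every orbit is infinite. -/
def IsAperiodic {X : Type*} [MeasurableSpace X] (μ : Measure X)
    (r : X → X → Prop) : Prop :=
  ∀ᵐ x ∂μ, {y | r x y}.Infinite

/-- A relation is ergodic if every invariant measurable set is null or conull. -/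
def IsErgodicRel {X : Type*} [MeasurableSpace X] (μ : Measure X)
    (r : X → X → Prop) : Prop :=
  ∀ A : Set X, MeasurableSet A → IsInvariant r A → μ A = 0 ∨ μ Aᶜ = 0

/-- `R ⊂ S` is a translation finite extension: finitely many full-group elements of `S`
suffice to cover almost every `S`-orbit by translates of `R`-orbits. -/
def IsTransFinExt {X : Type*} [MeasurableSpace X] (μ : Measure X)
    (r s : X → X → Prop) : Prop :=
  (∀ x y, r x y → s x y) ∧
  ∃ F : Finset (X ≃ᵐ X), (∀ f ∈ F, ∀ x, s x (f x)) ∧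
    ∀ᵐ x ∂μ, ∀ y, s x y ↔ ∃ f ∈ F, ∃ g ∈ F, ∃ z, r (g.symm x) z ∧ y = f z


open MeasureTheory

section Bij

variable {X : Type*} [MeasurableSpace X]

/-- A partial measurable bijection with total-function witnesses for both directions. -/
structure Bij (X : Type*) [MeasurableSpace X] where
  s : Set X
  t : Set X
  f : X → X
  g : X → X
  ms : MeasurableSet s
  mt : MeasurableSet t
  mf : Measurable f
  mg : Measurable g
  hft : Set.MapsTo f s t
  hgs : Set.MapsTo g t s
  gf : ∀ x ∈ s, g (f x) = x
  fg : ∀ y ∈ t, f (g y) = y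

namespace Bij

theorem injOn (b : Bij X) : Set.InjOn b.f b.s := fun x hx y hy h => by
  rw [← b.gf x hx, ← b.gf y hy, h]

theorem image_eq (b : Bij X) {E : Set X} (hE : E ⊆ b.s) :
    b.f '' E = b.t ∩ b.g ⁻¹' E := by
  ext y
  constructor
  · rintro ⟨x, hx, rfl⟩
    exact ⟨b.hft (hE hx), by simpa [b.gf x (hE hx)] using hx⟩
  · rintro ⟨hyt, hyE⟩
    exact ⟨b.g y, hyE, b.fg y hyt⟩

theorem image_meas (b : Bij X) {E : Set X} (hE : E ⊆ b.s) (hEm : MeasurableSet E) :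
    MeasurableSet (b.f '' E) := by
  rw [b.image_eq hE]; exact b.mt.inter (b.mg hEm)

/-- Inverse. -/
def symm (b : Bij X) : Bij X :=
  ⟨b.t, b.s, b.g, b.f, b.mt, b.ms, b.mg, b.mf, b.hgs, b.hft, b.fg, b.gf⟩

/-- Composition: `f := v.f ∘ u.f`. -/
def trans (u v : Bij X) : Bij X where
  s := u.s ∩ u.f ⁻¹' v.s
  t := v.t ∩ v.g ⁻¹' u.t
  f := v.f ∘ u.f
  g := u.g ∘ v.g
  ms := u.ms.inter (u.mf v.ms)
  mt := v.mt.inter (v.mg u.mt)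
  mf := v.mf.comp u.mf
  mg := u.mg.comp v.mg
  hft := by
    rintro x ⟨hx1, hx2⟩
    refine ⟨v.hft hx2, ?_⟩
    simp only [Set.mem_preimage, Function.comp_apply, v.gf _ hx2]
    exact u.hft hx1
  hgs := by
    rintro y ⟨hy1, hy2⟩
    refine ⟨u.hgs hy2, ?_⟩
    simp only [Set.mem_preimage, Function.comp_apply, u.fg _ hy2]
    exact v.hgs hy1
  gf := by
    rintro x ⟨hx1, hx2⟩
    simp only [Function.comp_apply, v.gf _ hx2, u.gf _ hx1]
  fg := by
    rintro y ⟨hy1, hy2⟩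
    simp only [Function.comp_apply, u.fg _ hy2, v.fg _ hy1]

@[simp] theorem trans_s (u v : Bij X) : (u.trans v).s = u.s ∩ u.f ⁻¹' v.s := rfl
@[simp] theorem trans_t (u v : Bij X) : (u.trans v).t = v.t ∩ v.g ⁻¹' u.t := rfl
@[simp] theorem trans_f (u v : Bij X) : (u.trans v).f = v.f ∘ u.f := rfl
@[simp] theorem trans_g (u v : Bij X) : (u.trans v).g = u.g ∘ v.g := rfl
@[simp] theorem symm_s (b : Bij X) : b.symm.s = b.t := rfl
@[simp] theorem symm_t (b : Bij X) : b.symm.t = b.s := rfl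
@[simp] theorem symm_f (b : Bij X) : b.symm.f = b.g := rfl
@[simp] theorem symm_g (b : Bij X) : b.symm.g = b.f := rfl
@[simp] theorem symm_symm (b : Bij X) : b.symm.symm = b := rfl


/-- Identity. -/
def idB : Bij X :=
  ⟨Set.univ, Set.univ, id, id, MeasurableSet.univ, MeasurableSet.univ,
    measurable_id, measurable_id, Set.mapsTo_univ _ _, Set.mapsTo_univ _ _,
    fun _ _ => rfl, fun _ _ => rfl⟩

/-- Restriction of the source to a measurable subset. -/
def restrict (b : Bij X) (E : Set X) (hEm : MeasurableSet E) (hE : E ⊆ b.s) : Bij X where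
  s := E
  t := b.t ∩ b.g ⁻¹' E
  f := b.f
  g := b.g
  ms := hEm
  mt := b.mt.inter (b.mg hEm)
  mf := b.mf
  mg := b.mg
  hft := fun x hx => ⟨b.hft (hE hx), show b.g (b.f x) ∈ E by rw [b.gf x (hE hx)]; exact hx⟩
  hgs := fun y hy => hy.2
  gf := fun x hx => b.gf x (hE hx)
  fg := fun y hy => b.fg y hy.1

@[simp] theorem idB_s : (@idB X _).s = Set.univ := rfl
@[simp] theorem idB_f : (@idB X _).f = id := rfl
@[simp] theorem restrict_s (b : Bij X) (E : Set X) (hEm : MeasurableSet E) (hE : E ⊆ b.s) :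
    (b.restrict E hEm hE).s = E := rfl
@[simp] theorem restrict_f (b : Bij X) (E : Set X) (hEm : MeasurableSet E) (hE : E ⊆ b.s) :
    (b.restrict E hEm hE).f = b.f := rfl
@[simp] theorem restrict_g (b : Bij X) (E : Set X) (hEm : MeasurableSet E) (hE : E ⊆ b.s) :
    (b.restrict E hEm hE).g = b.g := rfl

theorem restrict_t (b : Bij X) (E : Set X) (hEm : MeasurableSet E) (hE : E ⊆ b.s) :
    (b.restrict E hEm hE).t = b.f '' E := (b.image_eq hE).symm

/-- From a `PartialIso` (needs standard Borel to invert measurably). -/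
noncomputable def ofPartialIso [StandardBorelSpace X] {r : X → X → Prop}
    (θ : PartialIso X r) : Bij X := by
  haveI : StandardBorelSpace θ.dom := θ.dom_meas.standardBorel
  have hmj : Measurable (fun x : θ.dom => θ.toFun x) :=
    θ.meas.comp measurable_subtype_coe
  have hij : Function.Injective (fun x : θ.dom => θ.toFun x) := fun a b h =>
    Subtype.ext (θ.injOn a.2 b.2 h)
  have hemb : MeasurableEmbedding (fun x : θ.dom => θ.toFun x) :=
    hmj.measurableEmbedding hij
  exact
  { s := θ.dom
    t := θ.toFun '' θ.dom
    f := θ.toFun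
    g := Function.extend (fun x : θ.dom => θ.toFun x) (fun x => (x : X)) id
    ms := θ.dom_meas
    mt := θ.image_meas
    mf := θ.meas
    mg := hemb.measurable_extend measurable_subtype_coe measurable_id
    hft := Set.mapsTo_image _ _
    hgs := by
      rintro y ⟨x, hx, rfl⟩
      have : (fun x : θ.dom => θ.toFun x) ⟨x, hx⟩ = θ.toFun x := rfl
      rw [← this, hij.extend_apply]
      exact hx
    gf := by
      intro x hx
      have : (fun x : θ.dom => θ.toFun x) ⟨x, hx⟩ = θ.toFun x := rfl
      rw [← this, hij.extend_apply]
    fg := by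
      rintro y ⟨x, hx, rfl⟩
      have : (fun x : θ.dom => θ.toFun x) ⟨x, hx⟩ = θ.toFun x := rfl
      rw [← this, hij.extend_apply] }

@[simp] theorem ofPartialIso_s [StandardBorelSpace X] {r : X → X → Prop}
    (θ : PartialIso X r) : (ofPartialIso θ).s = θ.dom := rfl

@[simp] theorem ofPartialIso_f [StandardBorelSpace X] {r : X → X → Prop}
    (θ : PartialIso X r) : (ofPartialIso θ).f = θ.toFun := rfl

end Bij

/-- The graph of `b` is contained in `r`. -/
def GraphIn (r : X → X → Prop) (b : Bij X) : Prop := ∀ x ∈ b.s, r x (b.f x)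

namespace GraphIn

variable {r : X → X → Prop}

theorem symm (he : Equivalence r) {b : Bij X} (hb : GraphIn r b) : GraphIn r b.symm :=
  fun y hy => by
  have h1 : b.g y ∈ b.s := b.hgs hy
  have := hb _ h1
  rw [b.fg y hy] at this
  exact he.symm this

theorem trans (he : Equivalence r) {u v : Bij X} (hu : GraphIn r u) (hv : GraphIn r v) :
    GraphIn r (u.trans v) := by
  intro x hx
  rw [Bij.trans_s] at hx
  exact he.trans (hu x hx.1) (hv _ hx.2)

theorem idB (he : Equivalence r) : GraphIn r (Bij.idB (X := X)) := fun x _ => he.refl x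

theorem restrict {b : Bij X} (hb : GraphIn r b) (E : Set X) (hEm : MeasurableSet E)
    (hE : E ⊆ b.s) : GraphIn r (b.restrict E hEm hE) := fun x hx => hb x (hE hx)

theorem ofPartialIso [StandardBorelSpace X] (θ : PartialIso X r) :
    GraphIn r (Bij.ofPartialIso θ) := θ.mem_rel

end GraphIn

section MeasurePres

variable [StandardBorelSpace X] {μ : Measure X} {r : X → X → Prop}

/-- Swap lemma: a piece moved off itself has the same measure as its image. -/
theorem measure_image_piece (hr : IsStdEqRel μ r) (b : Bij X) (hbr : GraphIn r b)
    {P : Set X} (hPm : MeasurableSet P) (hPs : P ⊆ b.s)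
    (hdisj : ∀ x ∈ P, b.f x ∉ P) : μ (b.f '' P) = μ P := by
  have hIm : MeasurableSet (b.f '' P) := b.image_meas hPs hPm
  have hPI : ∀ y ∈ b.f '' P, y ∉ P := by
    rintro y ⟨x, hx, rfl⟩; exact hdisj x hx
  -- the swap map
  classical
  set T : X → X := P.piecewise b.f ((b.f '' P).piecewise b.g id) with hT
  have hTP : ∀ x ∈ P, T x = b.f x := fun x hx => Set.piecewise_eq_of_mem _ _ _ hx
  have hTI : ∀ y ∈ b.f '' P, T y = b.g y := by
    intro y hy
    rw [hT, Set.piecewise_eq_of_notMem _ _ _ (hPI y hy), Set.piecewise_eq_of_mem _ _ _ hy]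
  have hTO : ∀ z, z ∉ P → z ∉ b.f '' P → T z = z := by
    intro z h1 h2
    rw [hT, Set.piecewise_eq_of_notMem _ _ _ h1, Set.piecewise_eq_of_notMem _ _ _ h2, id_eq]
  have hgP : ∀ y ∈ b.f '' P, b.g y ∈ P := by
    rintro y ⟨x, hx, rfl⟩; rwa [b.gf x (hPs hx)]
  have hinv : Function.Involutive T := by
    intro x
    by_cases h1 : x ∈ P
    · rw [hTP x h1]
      have h2 : b.f x ∈ b.f '' P := Set.mem_image_of_mem _ h1
      rw [hTI _ h2, b.gf x (hPs h1)]
    · by_cases h2 : x ∈ b.f '' P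
      · rw [hTI x h2]
        have h3 : b.g x ∈ P := hgP x h2
        rw [hTP _ h3, b.fg x (by rcases h2 with ⟨z, hz, rfl⟩; exact b.hft (hPs hz))]
      · rw [hTO x h1 h2, hTO x h1 h2]
  have hTmeas : Measurable T :=
    Measurable.piecewise hPm b.mf (Measurable.piecewise hIm b.mg measurable_id)
  set Teq : X ≃ᵐ X :=
    { toEquiv := hinv.toPerm
      measurable_toFun := hTmeas
      measurable_invFun := hTmeas } with hTeq
  have hcls : ∀ x y, r x y → r (Teq x) (Teq y) := by
    have hstep : ∀ x, r x (T x) := by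
      intro x
      by_cases h1 : x ∈ P
      · rw [hTP x h1]; exact hbr x (hPs h1)
      · by_cases h2 : x ∈ b.f '' P
        · rw [hTI x h2]
          have h3 : b.g x ∈ P := hgP x h2
          have := hbr _ (hPs h3)
          rw [b.fg x (by rcases h2 with ⟨z, hz, rfl⟩; exact b.hft (hPs hz))] at this
          exact hr.equivalence.symm this
        · rw [hTO x h1 h2]; exact hr.equivalence.refl x
    intro x y hxy
    exact hr.equivalence.trans (hr.equivalence.symm (hstep x))
      (hr.equivalence.trans hxy (hstep y))
  have hmp : MeasurePreserving Teq μ μ := hr.fullGroup_measurePreserving Teq hcls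
  have hpre : Teq ⁻¹' (b.f '' P) = P := by
    ext x
    simp only [Set.mem_preimage]
    constructor
    · intro hx
      by_contra h1
      by_cases h2 : x ∈ b.f '' P
      · have : Teq x = b.g x := hTI x h2
        rw [this] at hx
        exact hPI _ hx (hgP x h2)
      · have : Teq x = x := hTO x h1 h2
        rw [this] at hx; exact h2 hx
    · intro hx
      have : Teq x = b.f x := hTP x hx
      rw [this]; exact Set.mem_image_of_mem _ hx
  calc μ (b.f '' P) = μ (Teq ⁻¹' (b.f '' P)) := (hmp.measure_preimage hIm.nullMeasurableSet).symm
    _ = μ P := by rw [hpre]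

/-- Partial isomorphisms inside a standard equivalence relation preserve measure. -/
theorem measure_image_eq (hr : IsStdEqRel μ r) (b : Bij X) (hbr : GraphIn r b)
    {E : Set X} (hEm : MeasurableSet E) (hEs : E ⊆ b.s) : μ (b.f '' E) = μ E := by
  classical
  obtain ⟨emb, hemb⟩ := exists_measurableEmbedding_real X
  -- fixed and moving parts
  have hfixm : MeasurableSet {x | emb (b.f x) = emb x} := by
    have h1 : MeasurableSet {x | emb (b.f x) ≤ emb x} :=
      measurableSet_le (hemb.measurable.comp b.mf) hemb.measurable
    have h2 : MeasurableSet {x | emb x ≤ emb (b.f x)} :=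
      measurableSet_le hemb.measurable (hemb.measurable.comp b.mf)
    have : {x | emb (b.f x) = emb x} = {x | emb (b.f x) ≤ emb x} ∩ {x | emb x ≤ emb (b.f x)} := by
      ext x; simp [le_antisymm_iff]
    rw [this]; exact h1.inter h2
  set Fix : Set X := {x | emb (b.f x) = emb x} with hFix
  have hfix_iff : ∀ x, x ∈ Fix ↔ b.f x = x := fun x => ⟨fun h => hemb.injective h, fun h => by
    simp [hFix, h]⟩
  -- pieces of the moving part, indexed by ℚ × Bool
  set piece : ℚ ⊕ ℚ → Set X := fun c =>
    Sum.elim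
      (fun q : ℚ => (E \ Fix) ∩ {x | emb x ≤ (q : ℝ)} ∩ {x | (q : ℝ) < emb (b.f x)})
      (fun q : ℚ => (E \ Fix) ∩ {x | emb (b.f x) ≤ (q : ℝ)} ∩ {x | (q : ℝ) < emb x}) c
    with hpiece
  have hpiecem : ∀ c, MeasurableSet (piece c) := by
    rintro (q | q) <;> simp only [hpiece, Sum.elim_inl, Sum.elim_inr]
    · exact ((hEm.diff hfixm).inter
        (measurableSet_le hemb.measurable measurable_const)).inter
        (measurableSet_lt measurable_const (hemb.measurable.comp b.mf))
    · exact ((hEm.diff hfixm).inter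
        (measurableSet_le (hemb.measurable.comp b.mf) measurable_const)).inter
        (measurableSet_lt measurable_const hemb.measurable)
  have hpiece_subset : ∀ c, piece c ⊆ E \ Fix := by
    rintro (q | q) x hx <;> simp only [hpiece, Sum.elim_inl, Sum.elim_inr] at hx <;> exact hx.1.1
  have hpiece_off : ∀ c, ∀ x ∈ piece c, b.f x ∉ piece c := by
    rintro (q | q) x hx hfx <;>
      simp only [hpiece, Sum.elim_inl, Sum.elim_inr, Set.mem_inter_iff,
        Set.mem_setOf_eq] at hx hfx
    · exact absurd hfx.1.2 (not_le.mpr hx.2)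
    · exact absurd hx.1.2 (not_le.mpr hfx.2)
  have hpiece_cover : E \ Fix ⊆ ⋃ c, piece c := by
    intro x hx
    have hne : emb (b.f x) ≠ emb x := fun h => hx.2 h
    rcases lt_or_gt_of_ne hne with h | h
    · obtain ⟨q, hq1, hq2⟩ := exists_rat_btwn h
      refine Set.mem_iUnion.mpr ⟨Sum.inr q, ?_⟩
      simp only [hpiece, Sum.elim_inr]
      exact ⟨⟨hx, hq1.le⟩, hq2⟩
    · obtain ⟨q, hq1, hq2⟩ := exists_rat_btwn h
      refine Set.mem_iUnion.mpr ⟨Sum.inl q, ?_⟩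
      simp only [hpiece, Sum.elim_inl]
      exact ⟨⟨hx, hq1.le⟩, hq2⟩
  -- disjointify
  set e : ℕ → ℚ ⊕ ℚ := fun n => (Denumerable.eqv (ℚ ⊕ ℚ)).symm n with he
  set P : ℕ → Set X := disjointed (fun n => piece (e n)) with hP
  have hPm : ∀ n, MeasurableSet (P n) := MeasurableSet.disjointed fun n => hpiecem _
  have hPsub : ∀ n, P n ⊆ piece (e n) := disjointed_subset _
  have hPdisj : Pairwise (Function.onFun Disjoint P) := disjoint_disjointed _
  have hPunion : ⋃ n, P n = E \ Fix := by
    rw [hP, iUnion_disjointed]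
    apply Set.Subset.antisymm
    · exact Set.iUnion_subset fun n => hpiece_subset _
    · intro x hx
      obtain ⟨c, hc⟩ := Set.mem_iUnion.mp (hpiece_cover hx)
      exact Set.mem_iUnion.mpr ⟨(Denumerable.eqv (ℚ ⊕ ℚ)) c, by
        simpa [he] using hc⟩
  -- full decomposition of E indexed by Option ℕ
  set fam : Option ℕ → Set X := fun o => o.elim (E ∩ Fix) P with hfam
  have hfamm : ∀ o, MeasurableSet (fam o) := by
    rintro (_ | n)
    · exact hEm.inter hfixm
    · exact hPm n
  have hfam_subE : ∀ o, fam o ⊆ E := by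
    rintro (_ | n)
    · exact Set.inter_subset_left
    · exact fun x hx => ((hpiece_subset _) (hPsub n hx)).1
  have hfam_union : ⋃ o, fam o = E := by
    apply Set.Subset.antisymm (Set.iUnion_subset hfam_subE)
    intro x hx
    by_cases hfx : x ∈ Fix
    · exact Set.mem_iUnion.mpr ⟨none, hx, hfx⟩
    · have : x ∈ ⋃ n, P n := hPunion.symm ▸ ⟨hx, hfx⟩
      obtain ⟨n, hn⟩ := Set.mem_iUnion.mp this
      exact Set.mem_iUnion.mpr ⟨some n, hn⟩
  have hfam_disj : Pairwise (Function.onFun Disjoint fam) := by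
    rintro (_ | m) (_ | n) hmn
    · exact absurd rfl hmn
    · refine Set.disjoint_left.mpr fun x hx1 hx2 => ?_
      exact ((hpiece_subset _) (hPsub n hx2)).2 hx1.2
    · refine Set.disjoint_left.mpr fun x hx1 hx2 => ?_
      exact ((hpiece_subset _) (hPsub m hx1)).2 hx2.2
    · exact hPdisj (by simpa using hmn)
  -- measures of pieces are preserved
  have hpieceEq : ∀ o, μ (b.f '' fam o) = μ (fam o) := by
    rintro (_ | n)
    · have : b.f '' fam none = fam none := by
        apply Set.Subset.antisymm
        · rintro y ⟨x, hx, rfl⟩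
          have := (hfix_iff x).mp hx.2
          rw [this]; exact hx
        · intro y hy
          have := (hfix_iff y).mp hy.2
          exact ⟨y, hy, this⟩
      rw [this]
    · exact measure_image_piece hr b hbr (hPm n) (fun x hx => hEs (hfam_subE (some n) hx))
        (fun x hx hfx => hpiece_off (e n) x (hPsub n hx) (hPsub n hfx))
  -- images are pairwise disjoint
  have himg_disj : Pairwise (Function.onFun Disjoint fun o => b.f '' fam o) := by
    intro o1 o2 ho
    refine Set.disjoint_left.mpr ?_
    rintro y ⟨x1, hx1, rfl⟩ ⟨x2, hx2, hx⟩
    have : x2 = x1 := b.injOn (hEs (hfam_subE _ hx2)) (hEs (hfam_subE _ hx1)) hx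
    subst this
    exact Set.disjoint_left.mp (hfam_disj ho) hx1 hx2
  have himg_m : ∀ o, MeasurableSet (b.f '' fam o) :=
    fun o => b.image_meas (fun x hx => hEs (hfam_subE o hx)) (hfamm o)
  calc μ (b.f '' E) = μ (⋃ o, b.f '' fam o) := by
        rw [← Set.image_iUnion, hfam_union]
    _ = ∑' o, μ (b.f '' fam o) := measure_iUnion himg_disj himg_m
    _ = ∑' o, μ (fam o) := by exact tsum_congr hpieceEq
    _ = μ (⋃ o, fam o) := (measure_iUnion hfam_disj hfamm).symm
    _ = μ E := by rw [hfam_union]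

end MeasurePres

end Bij

section Construction

variable {X : Type*} [MeasurableSpace X] [StandardBorelSpace X] {r : X → X → Prop}

/-- Codes for generators and their inverses. -/
abbrev Code : Type := ℕ × Bool

/-- Words in the generators. -/
abbrev Word : Type := List Code

noncomputable instance : Denumerable Code := Denumerable.ofEncodableOfInfinite _
noncomputable instance : Denumerable Word := by unfold Word; infer_instance

/-- The generator (or inverse generator) associated to a code. -/
noncomputable def gen (Φ : ℕ → PartialIso X r) (c : Code) : Bij X :=
  if c.2 then Bij.ofPartialIso (Φ c.1) else (Bij.ofPartialIso (Φ c.1)).symm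

theorem gen_graphIn (he : Equivalence r) (Φ : ℕ → PartialIso X r) (c : Code) :
    GraphIn r (gen Φ c) := by
  unfold gen
  split
  · exact GraphIn.ofPartialIso _
  · exact GraphIn.symm he (GraphIn.ofPartialIso _)

theorem gen_symm (Φ : ℕ → PartialIso X r) (c : Code) :
    (gen Φ c).symm = gen Φ (c.1, !c.2) := by
  rcases c with ⟨i, (_ | _)⟩ <;> simp [gen]

/-- The partial bijection associated to a word (apply the head first). -/
noncomputable def wordBij (Φ : ℕ → PartialIso X r) : Word → Bij X
  | [] => Bij.idB
  | c :: w => (gen Φ c).trans (wordBij Φ w)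

theorem wordBij_graphIn (he : Equivalence r) (Φ : ℕ → PartialIso X r) (w : Word) :
    GraphIn r (wordBij Φ w) := by
  induction w with
  | nil => exact GraphIn.idB he
  | cons c w ih => exact GraphIn.trans he (gen_graphIn he Φ c) ih

variable (Φ : ℕ → PartialIso X r) (A : Set X)

/-- The set of points at distance at most `n` from `A` in the graphing. -/
noncomputable def SS : ℕ → Set X
  | 0 => A
  | n + 1 => SS n ∪ ⋃ c : Code, (gen Φ c).s ∩ (gen Φ c).f ⁻¹' (SS n)

theorem SS_meas (hmA : MeasurableSet A) : ∀ n, MeasurableSet (SS Φ A n) := by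
  intro n
  induction n with
  | zero => exact hmA
  | succ n ih =>
    exact ih.union (MeasurableSet.iUnion fun c => ((gen Φ c).ms).inter ((gen Φ c).mf ih))

theorem SS_succ_left {n : ℕ} : SS Φ A n ⊆ SS Φ A (n + 1) := Set.subset_union_left

theorem SS_mono {m n : ℕ} (h : m ≤ n) : SS Φ A m ⊆ SS Φ A n := by
  induction n with
  | zero => simpa [Nat.le_zero.mp h]
  | succ n ih =>
    rcases Nat.lt_or_ge m (n + 1) with h' | h'
    · exact (ih (Nat.lt_succ_iff.mp h')).trans (SS_succ_left Φ A)
    · have : m = n + 1 := le_antisymm h h'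
      subst this; exact le_refl _

theorem SS_succ_of_step {n : ℕ} {c : Code} {x : X} (hx : x ∈ (gen Φ c).s)
    (hfx : (gen Φ c).f x ∈ SS Φ A n) : x ∈ SS Φ A (n + 1) :=
  Set.mem_union_right _ (Set.mem_iUnion.mpr ⟨c, hx, hfx⟩)

/-- The union of all the `SS n`: the saturation of `A`. -/
noncomputable def BSet : Set X := ⋃ n, SS Φ A n

theorem SS_subset_BSet {n : ℕ} : SS Φ A n ⊆ BSet Φ A := Set.subset_iUnion _ n

theorem BSet_step {c : Code} {x : X} (hx : x ∈ (gen Φ c).s) (hxB : x ∈ BSet Φ A) :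
    (gen Φ c).f x ∈ BSet Φ A := by
  obtain ⟨n, hn⟩ := Set.mem_iUnion.mp hxB
  have h1 : (gen Φ c).f x ∈ (gen Φ (c.1, !c.2)).s := by
    rw [← gen_symm]; exact (gen Φ c).hft hx
  have h2 : (gen Φ (c.1, !c.2)).f ((gen Φ c).f x) ∈ SS Φ A n := by
    rw [← gen_symm]
    show (gen Φ c).g ((gen Φ c).f x) ∈ SS Φ A n
    rw [(gen Φ c).gf x hx]
    exact hn
  exact SS_subset_BSet Φ A (SS_succ_of_step Φ A h1 h2)

/-- An equiv giving a fixed enumeration of codes. -/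
noncomputable def codeEquiv : Code ≃ ℕ := Denumerable.eqv Code

/-- The `k`-th good set: points of the `(n+1)`-st layer that can step into `SS n`
using the code numbered `k`. -/
noncomputable def GoodSet (n k : ℕ) : Set X :=
  (gen Φ (codeEquiv.symm k)).s ∩ (gen Φ (codeEquiv.symm k)).f ⁻¹' SS Φ A n

/-- The piece of the `(n+1)`-st layer whose least good code is number `k`. -/
noncomputable def Piece (n k : ℕ) : Set X :=
  ((SS Φ A (n + 1) \ SS Φ A n) ∩ GoodSet Φ A n k) \ ⋃ j ∈ Set.Iio k, GoodSet Φ A n j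

theorem GoodSet_meas (hmA : MeasurableSet A) (n k : ℕ) :
    MeasurableSet (GoodSet Φ A n k) :=
  ((gen Φ (codeEquiv.symm k)).ms).inter ((gen Φ (codeEquiv.symm k)).mf (SS_meas Φ A hmA n))

theorem Piece_meas (hmA : MeasurableSet A) (n k : ℕ) : MeasurableSet (Piece Φ A n k) :=
  (((SS_meas Φ A hmA (n + 1)).diff (SS_meas Φ A hmA n)).inter
    (GoodSet_meas Φ A hmA n k)).diff
    (MeasurableSet.biUnion (Set.to_countable _) fun j _ => GoodSet_meas Φ A hmA n j)

/-- The cells of the canonical partition of `BSet` indexed by words. -/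
noncomputable def CC : Word → Set X
  | [] => A
  | c :: w => Piece Φ A w.length (codeEquiv c) ∩ (gen Φ c).f ⁻¹' CC w

theorem CC_meas (hmA : MeasurableSet A) (w : Word) : MeasurableSet (CC Φ A w) := by
  induction w with
  | nil => exact hmA
  | cons c w ih => exact (Piece_meas Φ A hmA _ _).inter ((gen Φ c).mf ih)

theorem CC_subset_layer {c : Code} {w : Word} :
    CC Φ A (c :: w) ⊆ SS Φ A (w.length + 1) \ SS Φ A w.length := fun _x hx => hx.1.1.1

theorem CC_subset_SS : ∀ w : Word, CC Φ A w ⊆ SS Φ A w.length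
  | [] => le_refl _
  | c :: w => fun _x hx => hx.1.1.1.1

theorem CC_subset_wordBij_s : ∀ w : Word, CC Φ A w ⊆ (wordBij Φ w).s := by
  intro w
  induction w with
  | nil => simp [wordBij]
  | cons c w ih =>
    intro x hx
    rw [wordBij, Bij.trans_s]
    have hg : x ∈ GoodSet Φ A w.length (codeEquiv c) := hx.1.1.2
    simp only [GoodSet, Equiv.symm_apply_apply] at hg
    exact ⟨hg.1, ih hx.2⟩

theorem CC_mapsTo : ∀ w : Word, ∀ x ∈ CC Φ A w, (wordBij Φ w).f x ∈ A := by
  intro w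
  induction w with
  | nil => intro x hx; simpa [wordBij, CC] using hx
  | cons c w ih =>
    intro x hx
    rw [wordBij, Bij.trans_f]
    exact ih _ hx.2

theorem exists_CC : ∀ n, ∀ x ∈ SS Φ A n, ∃ w : Word, x ∈ CC Φ A w ∧ w.length ≤ n := by
  intro n
  induction n with
  | zero => exact fun x hx => ⟨[], hx, le_refl _⟩
  | succ n ih =>
    intro x hx
    by_cases hxn : x ∈ SS Φ A n
    · obtain ⟨w, hw, hl⟩ := ih x hxn
      exact ⟨w, hw, hl.trans (Nat.le_succ n)⟩
    · have hx' : x ∈ ⋃ c : Code, (gen Φ c).s ∩ (gen Φ c).f ⁻¹' SS Φ A n := by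
        rcases hx with h | h
        · exact absurd h hxn
        · exact h
      obtain ⟨c, hc⟩ := Set.mem_iUnion.mp hx'
      have hex : ∃ k, x ∈ GoodSet Φ A n k := by
        refine ⟨codeEquiv c, ?_⟩
        unfold GoodSet
        rw [Equiv.symm_apply_apply]
        exact hc
      classical
      have hk0 : x ∈ GoodSet Φ A n (Nat.find hex) := Nat.find_spec hex
      set k0 := Nat.find hex with hk0def
      set c0 : Code := codeEquiv.symm k0 with hc0def
      have hfx : (gen Φ c0).f x ∈ SS Φ A n := hk0.2
      obtain ⟨w, hw, hl⟩ := ih _ hfx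
      have hlen : w.length = n := by
        by_contra hne
        have hlt : w.length < n := lt_of_le_of_ne hl hne
        have h1 : (gen Φ c0).f x ∈ SS Φ A w.length := CC_subset_SS Φ A w hw
        have h2 : x ∈ SS Φ A (w.length + 1) := SS_succ_of_step Φ A hk0.1 h1
        exact hxn (SS_mono Φ A (by omega) h2)
      refine ⟨c0 :: w, ?_, by simp [hlen]⟩
      refine ⟨?_, hw⟩
      show x ∈ Piece Φ A w.length (codeEquiv c0)
      rw [hc0def, Equiv.apply_symm_apply, hlen]
      refine ⟨⟨⟨hx, hxn⟩, hk0⟩, ?_⟩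
      intro h
      simp only [Set.mem_iUnion, Set.mem_Iio, exists_prop] at h
      obtain ⟨j, hj, hjg⟩ := h
      exact Nat.find_min hex hj hjg

theorem CC_unique : ∀ w w' : Word, ∀ x, x ∈ CC Φ A w → x ∈ CC Φ A w' → w = w' := by
  intro w
  induction w with
  | nil =>
    rintro (_ | ⟨c', w'⟩) x hx hx'
    · rfl
    · exact absurd (SS_mono Φ A (Nat.zero_le _) hx) (CC_subset_layer Φ A hx').2
  | cons c w ih =>
    rintro (_ | ⟨c', w'⟩) x hx hx'
    · exact absurd (SS_mono Φ A (Nat.zero_le _) hx') (CC_subset_layer Φ A hx).2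
    · have h1 := CC_subset_layer Φ A hx
      have h2 := CC_subset_layer Φ A hx'
      have hlen : w.length = w'.length := by
        by_contra hne
        rcases Nat.lt_or_ge w.length w'.length with h | h
        · exact h2.2 (SS_mono Φ A h h1.1)
        · exact h1.2 (SS_mono Φ A (lt_of_le_of_ne h (fun hh => hne hh.symm)) h2.1)
      have gx : x ∈ GoodSet Φ A w.length (codeEquiv c) := hx.1.1.2
      have gx' : x ∈ GoodSet Φ A w.length (codeEquiv c') := by
        have := hx'.1.1.2; rwa [← hlen] at this
      have nx : x ∉ ⋃ j ∈ Set.Iio (codeEquiv c), GoodSet Φ A w.length j := hx.1.2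
      have nx' : x ∉ ⋃ j ∈ Set.Iio (codeEquiv c'), GoodSet Φ A w.length j := by
        have := hx'.1.2; rwa [← hlen] at this
      have hk : codeEquiv c = codeEquiv c' := by
        by_contra hne
        rcases Nat.lt_or_ge (codeEquiv c) (codeEquiv c') with h | h
        · exact nx' (Set.mem_biUnion h gx)
        · exact nx (Set.mem_biUnion (lt_of_le_of_ne h fun hh => hne hh.symm) gx')
      have hc : c = c' := codeEquiv.injective hk
      subst hc
      have := ih w' ((gen Φ c).f x) hx.2 hx'.2
      rw [this]

theorem mem_BSet_iff_CC {x : X} : x ∈ BSet Φ A ↔ ∃ w : Word, x ∈ CC Φ A w := by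
  constructor
  · intro hx
    obtain ⟨n, hn⟩ := Set.mem_iUnion.mp hx
    obtain ⟨w, hw, _⟩ := exists_CC Φ A n x hn
    exact ⟨w, hw⟩
  · rintro ⟨w, hw⟩
    exact SS_subset_BSet Φ A (CC_subset_SS Φ A w hw)

open Classical in
/-- The word attached to a point of `BSet`. -/
noncomputable def wordOf (x : X) : Word :=
  if h : ∃ w : Word, x ∈ CC Φ A w then h.choose else []

theorem wordOf_eq {x : X} {w : Word} (hx : x ∈ CC Φ A w) : wordOf Φ A x = w := by
  have h : ∃ w : Word, x ∈ CC Φ A w := ⟨w, hx⟩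
  rw [wordOf]
  rw [dif_pos h]
  exact CC_unique Φ A _ w x h.choose_spec hx

theorem mem_CC_wordOf {x : X} (hx : x ∈ BSet Φ A) : x ∈ CC Φ A (wordOf Φ A x) := by
  obtain ⟨w, hw⟩ := (mem_BSet_iff_CC Φ A).mp hx
  rw [wordOf_eq Φ A hw]
  exact hw

/-- The projection to `A` along the canonical words. -/
noncomputable def projA (x : X) : X := (wordBij Φ (wordOf Φ A x)).f x

theorem projA_mem {x : X} (hx : x ∈ BSet Φ A) : projA Φ A x ∈ A :=
  CC_mapsTo Φ A _ x (mem_CC_wordOf Φ A hx)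

theorem projA_of_mem_A {x : X} (hx : x ∈ A) : projA Φ A x = x := by
  have h0 : x ∈ CC Φ A [] := hx
  rw [projA, wordOf_eq Φ A h0]
  rfl

/-- The source cell of the induced generator indexed by `(i, w, w')`. -/
noncomputable def Epiece (i : ℕ) (w w' : Word) : Set X :=
  CC Φ A w ∩ ((Φ i).dom ∩ (Φ i).toFun ⁻¹' CC Φ A w')

theorem Epiece_meas (hmA : MeasurableSet A) (i : ℕ) (w w' : Word) :
    MeasurableSet (Epiece Φ A i w w') :=
  (CC_meas Φ A hmA w).inter ((Φ i).dom_meas.inter ((Φ i).meas (CC_meas Φ A hmA w')))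

theorem Epiece_subset (i : ℕ) (w w' : Word) :
    Epiece Φ A i w w' ⊆ (wordBij Φ w).s := fun _x hx => CC_subset_wordBij_s Φ A w hx.1

/-- The domain in `A` of the induced generator. -/
noncomputable def DomSet (i : ℕ) (w w' : Word) : Set X :=
  (wordBij Φ w).f '' Epiece Φ A i w w'

theorem DomSet_meas (hmA : MeasurableSet A) (i : ℕ) (w w' : Word) :
    MeasurableSet (DomSet Φ A i w w') :=
  (wordBij Φ w).image_meas (Epiece_subset Φ A i w w') (Epiece_meas Φ A hmA i w w')

theorem DomSet_subset_A (i : ℕ) (w w' : Word) : DomSet Φ A i w w' ⊆ A := by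
  rintro _ ⟨x, hx, rfl⟩
  exact CC_mapsTo Φ A w x hx.1

/-- The ambient composed bijection for the induced generator. -/
noncomputable def rho (i : ℕ) (w w' : Word) : Bij X :=
  (wordBij Φ w).symm.trans ((Bij.ofPartialIso (Φ i)).trans (wordBij Φ w'))

theorem DomSet_subset_rho_s (i : ℕ) (w w' : Word) :
    DomSet Φ A i w w' ⊆ (rho Φ i w w').s := by
  rintro _ ⟨x, hx, rfl⟩
  have hxs : x ∈ (wordBij Φ w).s := Epiece_subset Φ A i w w' hx
  have hmem : x ∈ ((Bij.ofPartialIso (Φ i)).trans (wordBij Φ w')).s := by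
    rw [Bij.trans_s, Bij.ofPartialIso_s]
    exact ⟨hx.2.1, CC_subset_wordBij_s Φ A w' hx.2.2⟩
  rw [rho, Bij.trans_s, Bij.symm_s, Bij.symm_f]
  refine ⟨(wordBij Φ w).hft hxs, ?_⟩
  rw [Set.mem_preimage, (wordBij Φ w).gf x hxs]
  exact hmem

/-- The induced generator on `A`. -/
noncomputable def psi (hmA : MeasurableSet A) (i : ℕ) (w w' : Word) : Bij X :=
  (rho Φ i w w').restrict (DomSet Φ A i w w') (DomSet_meas Φ A hmA i w w')
    (DomSet_subset_rho_s Φ A i w w')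

variable (hmA : MeasurableSet A)

theorem psi_s (i : ℕ) (w w' : Word) : (psi Φ A hmA i w w').s = DomSet Φ A i w w' := rfl

theorem psi_graphIn (he : Equivalence r) (i : ℕ) (w w' : Word) :
    GraphIn r (psi Φ A hmA i w w') :=
  GraphIn.restrict
    (GraphIn.trans he (GraphIn.symm he (wordBij_graphIn he Φ w))
      (GraphIn.trans he (GraphIn.ofPartialIso _) (wordBij_graphIn he Φ w'))) _ _ _

theorem psi_apply {i : ℕ} {w w' : Word} {x : X} (hx : x ∈ Epiece Φ A i w w') :
    (psi Φ A hmA i w w').f ((wordBij Φ w).f x) = (wordBij Φ w').f ((Φ i).toFun x) := by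
  have hxs : x ∈ (wordBij Φ w).s := Epiece_subset Φ A i w w' hx
  show (rho Φ i w w').f _ = _
  rw [rho, Bij.trans_f, Bij.trans_f, Bij.symm_f]
  simp only [Function.comp_apply, Bij.ofPartialIso_f]
  rw [(wordBij Φ w).gf x hxs]

theorem psi_mapsTo_A {i : ℕ} {w w' : Word} :
    ∀ x ∈ (psi Φ A hmA i w w').s, (psi Φ A hmA i w w').f x ∈ A := by
  rintro _ ⟨x, hx, rfl⟩
  rw [psi_apply Φ A hmA hx]
  exact CC_mapsTo Φ A w' _ hx.2.2

end Construction

section SubIso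

variable {X : Type*} [MeasurableSpace X] {r : X → X → Prop}

open Classical in
/-- The underlying function on the subtype. -/
noncomputable def subFun (A : Set X) (b : Bij X) (hmaps : ∀ x ∈ b.s, b.f x ∈ A) :
    A → A := fun a =>
  ⟨b.s.piecewise b.f id ↑a, by
    by_cases h : (a : X) ∈ b.s
    · rw [Set.piecewise_eq_of_mem _ _ _ h]; exact hmaps _ h
    · rw [Set.piecewise_eq_of_notMem _ _ _ h]; exact a.2⟩

theorem subFun_coe (A : Set X) (b : Bij X) (hmaps : ∀ x ∈ b.s, b.f x ∈ A) (a : A)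
    (ha : (a : X) ∈ b.s) : (subFun A b hmaps a : X) = b.f ↑a := by
  classical
  show b.s.piecewise b.f id ↑a = b.f ↑a
  exact Set.piecewise_eq_of_mem _ _ _ ha

open Classical in
/-- Transfer of a partial bijection within `A` to a partial isomorphism of the subtype. -/
noncomputable def subIso (A : Set X) (hmA : MeasurableSet A) (b : Bij X) (hs : b.s ⊆ A)
    (hmaps : ∀ x ∈ b.s, b.f x ∈ A) (hgr : GraphIn r b) :
    PartialIso A (fun a b : A => r ↑a ↑b) where
  dom := Subtype.val ⁻¹' b.s
  toFun := subFun A b hmaps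
  dom_meas := measurable_subtype_coe b.ms
  meas := Measurable.subtype_mk
    ((Measurable.piecewise b.ms b.mf measurable_id).comp measurable_subtype_coe)
  injOn := by
    intro a ha a' ha' h
    have h2 := congrArg Subtype.val h
    rw [subFun_coe A b hmaps a ha, subFun_coe A b hmaps a' ha'] at h2
    exact Subtype.ext (b.injOn ha ha' h2)
  image_meas := by
    have himg : subFun A b hmaps '' (Subtype.val ⁻¹' b.s) = Subtype.val ⁻¹' (b.f '' b.s) := by
      ext a
      constructor
      · rintro ⟨d, hd, rfl⟩
        rw [Set.mem_preimage, subFun_coe A b hmaps d hd]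
        exact ⟨↑d, hd, rfl⟩
      · rintro ⟨x, hx, hfx⟩
        refine ⟨⟨x, hs hx⟩, hx, Subtype.ext ?_⟩
        rw [subFun_coe A b hmaps ⟨x, hs hx⟩ hx]
        exact hfx
    rw [himg]
    exact measurable_subtype_coe (b.image_meas Set.Subset.rfl b.ms)
  mem_rel := by
    intro a ha
    have := subFun_coe A b hmaps a ha
    show r ↑a ↑(subFun A b hmaps a)
    rw [this]
    exact hgr _ ha

theorem subIso_dom (A : Set X) (hmA : MeasurableSet A) (b : Bij X) (hs : b.s ⊆ A)
    (hmaps : ∀ x ∈ b.s, b.f x ∈ A) (hgr : GraphIn r b) :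
    (subIso A hmA b hs hmaps hgr).dom = Subtype.val ⁻¹' b.s := rfl

theorem subIso_dom_measure (A : Set X) (hmA : MeasurableSet A) (b : Bij X) (hs : b.s ⊆ A)
    (hmaps : ∀ x ∈ b.s, b.f x ∈ A) (hgr : GraphIn r b) (μ : Measure X) :
    (μ.comap (Subtype.val : A → X)) ((subIso A hmA b hs hmaps hgr).dom) = μ b.s := by
  rw [subIso_dom, (MeasurableEmbedding.subtype_coe hmA).comap_apply,
    Set.image_preimage_eq_inter_range, Subtype.range_coe]
  rw [Set.inter_eq_self_of_subset_left hs]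

end SubIso

section MainLemma

variable {X : Type*} [MeasurableSpace X] [StandardBorelSpace X]

theorem cost_le_of_graphing {μ : Measure X} {r : X → X → Prop}
    (hr : IsStdEqRel μ r) (A : Set X) (hmA : MeasurableSet A)
    (Φ : ℕ → PartialIso X r) (hΦ : IsGraphing Φ) :
    cost (μ.comap (Subtype.val : A → X)) (fun a b : A => r ↑a ↑b) ≤
      ∑' i, μ ((Φ i).dom) := by
  classical
  have he := hr.equivalence
  haveI : Denumerable (ℕ × (Word × Word)) := by infer_instance
  set e : ℕ ≃ ℕ × (Word × Word) := (Denumerable.eqv (ℕ × (Word × Word))).symm with hedef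
  set Ψ : ℕ → PartialIso A (fun a b : A => r ↑a ↑b) := fun n =>
    subIso A hmA (psi Φ A hmA (e n).1 (e n).2.1 (e n).2.2)
      (DomSet_subset_A Φ A (e n).1 (e n).2.1 (e n).2.2)
      (psi_mapsTo_A Φ A hmA)
      (psi_graphIn Φ A hmA he (e n).1 (e n).2.1 (e n).2.2) with hΨdef
  -- edge relations
  set EPhi : X → X → Prop := fun x y => ∃ i, x ∈ (Φ i).dom ∧ y = (Φ i).toFun x with hEPhi
  set EPsiX : X → X → Prop := fun x y =>
    ∃ ι : ℕ × (Word × Word), x ∈ (psi Φ A hmA ι.1 ι.2.1 ι.2.2).s ∧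
      y = (psi Φ A hmA ι.1 ι.2.1 ι.2.2).f x with hEPsiX
  -- B-stability of Φ-edges
  have hgen_true : ∀ i : ℕ, gen Φ (i, true) = Bij.ofPartialIso (Φ i) := fun i => rfl
  have hBiff : ∀ x y, EPhi x y → (x ∈ BSet Φ A ↔ y ∈ BSet Φ A) := by
    rintro x y ⟨i, hxd, rfl⟩
    constructor
    · intro hx
      have h1 : x ∈ (gen Φ (i, true)).s := by rw [hgen_true]; exact hxd
      have := BSet_step Φ A h1 hx
      rwa [hgen_true] at this
    · intro hy
      obtain ⟨n, hn⟩ := Set.mem_iUnion.mp hy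
      have h1 : x ∈ (gen Φ (i, true)).s := by rw [hgen_true]; exact hxd
      have h2 : (gen Φ (i, true)).f x ∈ SS Φ A n := by rw [hgen_true]; exact hn
      exact SS_subset_BSet Φ A (SS_succ_of_step Φ A h1 h2)
  -- projections of Φ-edges are ψ-edges
  have hproj : ∀ x y, EPhi x y → x ∈ BSet Φ A → y ∈ BSet Φ A →
      Relation.EqvGen EPsiX (projA Φ A x) (projA Φ A y) := by
    rintro x y ⟨i, hxd, rfl⟩ hxB hyB
    have hxC : x ∈ CC Φ A (wordOf Φ A x) := mem_CC_wordOf Φ A hxB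
    have hyC : (Φ i).toFun x ∈ CC Φ A (wordOf Φ A ((Φ i).toFun x)) := mem_CC_wordOf Φ A hyB
    have hE : x ∈ Epiece Φ A i (wordOf Φ A x) (wordOf Φ A ((Φ i).toFun x)) :=
      ⟨hxC, hxd, hyC⟩
    apply Relation.EqvGen.rel
    refine ⟨(i, wordOf Φ A x, wordOf Φ A ((Φ i).toFun x)), ⟨x, hE, rfl⟩, ?_⟩
    simp only [projA]
    rw [psi_apply Φ A hmA hE]
  -- combined invariance claim
  have claim1 : ∀ x y, Relation.EqvGen EPhi x y →
      (x ∈ BSet Φ A ↔ y ∈ BSet Φ A) ∧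
      (x ∈ BSet Φ A → Relation.EqvGen EPsiX (projA Φ A x) (projA Φ A y)) := by
    intro x y h
    induction h with
    | rel x y hxy =>
      exact ⟨hBiff x y hxy, fun hx => hproj x y hxy hx ((hBiff x y hxy).mp hx)⟩
    | refl x => exact ⟨Iff.rfl, fun _ => Relation.EqvGen.refl _⟩
    | symm x y _ ih =>
      exact ⟨ih.1.symm, fun hy => Relation.EqvGen.symm _ _ (ih.2 (ih.1.mpr hy))⟩
    | trans x y z _ _ ih1 ih2 =>
      exact ⟨ih1.1.trans ih2.1, fun hx =>
        Relation.EqvGen.trans _ _ _ (ih1.2 hx) (ih2.2 (ih1.1.mp hx))⟩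
  -- membership along ψ-edges
  have hmemPsiX : ∀ x y, Relation.EqvGen EPsiX x y → x = y ∨ (x ∈ A ∧ y ∈ A) := by
    intro x y h
    induction h with
    | rel x y hxy =>
      obtain ⟨ι, hι, rfl⟩ := hxy
      exact Or.inr ⟨DomSet_subset_A Φ A ι.1 ι.2.1 ι.2.2 hι,
        psi_mapsTo_A Φ A hmA _ hι⟩
    | refl x => exact Or.inl rfl
    | symm x y _ ih =>
      rcases ih with h | h
      · exact Or.inl h.symm
      · exact Or.inr ⟨h.2, h.1⟩
    | trans x y z _ _ ih1 ih2 =>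
      rcases ih1 with rfl | h1
      · exact ih2
      · rcases ih2 with rfl | h2
        · exact Or.inr h1
        · exact Or.inr ⟨h1.1, h2.2⟩
  -- lifting ψ-edge chains to the subtype
  set EPsi : A → A → Prop := fun a b => ∃ n, a ∈ (Ψ n).dom ∧ b = (Ψ n).toFun a with hEPsi
  have hlift : ∀ x y, Relation.EqvGen EPsiX x y →
      ∀ (hx : x ∈ A) (hy : y ∈ A), Relation.EqvGen EPsi ⟨x, hx⟩ ⟨y, hy⟩ := by
    intro x y h
    induction h with
    | rel x y hxy =>
      intro hx hy
      obtain ⟨ι, hι, rfl⟩ := hxy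
      apply Relation.EqvGen.rel
      refine ⟨e.symm ι, ?_, ?_⟩
      · show (⟨x, hx⟩ : A) ∈ (Ψ (e.symm ι)).dom
        rw [hΨdef]
        simp only [Equiv.apply_symm_apply]
        exact hι
      · apply Subtype.ext
        rw [hΨdef]
        simp only [Equiv.apply_symm_apply]
        show (psi Φ A hmA ι.1 ι.2.1 ι.2.2).f x =
          ((subIso A hmA _ _ _ _).toFun ⟨x, hx⟩ : X)
        rw [show (subIso A hmA (psi Φ A hmA ι.1 ι.2.1 ι.2.2)
            (DomSet_subset_A Φ A ι.1 ι.2.1 ι.2.2) (psi_mapsTo_A Φ A hmA)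
            (psi_graphIn Φ A hmA he ι.1 ι.2.1 ι.2.2)).toFun = subFun A _ _ from rfl]
        rw [subFun_coe A (psi Φ A hmA ι.1 ι.2.1 ι.2.2) (psi_mapsTo_A Φ A hmA) ⟨x, hx⟩ hι]
        exact psi_mapsTo_A Φ A hmA
    | refl x => intro hx hy; exact Relation.EqvGen.refl _
    | symm x y _ ih => intro hy hx; exact Relation.EqvGen.symm _ _ (ih hx hy)
    | trans x y z h1 _ ih1 ih2 =>
      intro hx hz
      rcases hmemPsiX x y h1 with rfl | ⟨_, hy⟩
      · exact ih2 hx hz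
      · exact Relation.EqvGen.trans _ _ _ (ih1 hx hy) (ih2 hy hz)
  -- Ψ is a graphing of the restricted relation
  have hgraph : IsGraphing Ψ := by
    intro a b
    constructor
    · intro hab
      have h1 : Relation.EqvGen EPhi ↑a ↑b := (hΦ ↑a ↑b).mp hab
      have haB : (a : X) ∈ BSet Φ A := SS_subset_BSet Φ A (n := 0) a.2
      have h2 := (claim1 ↑a ↑b h1).2 haB
      rw [projA_of_mem_A Φ A a.2, projA_of_mem_A Φ A b.2] at h2
      exact hlift ↑a ↑b h2 a.2 b.2
    · intro h
      induction h with
      | rel a b hab =>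
        obtain ⟨n, hn, rfl⟩ := hab
        exact (Ψ n).mem_rel a hn
      | refl a => exact he.refl _
      | symm a b _ ih => exact he.symm ih
      | trans a b c _ _ ih1 ih2 => exact he.trans ih1 ih2
  -- cost estimate
  calc cost (μ.comap (Subtype.val : A → X)) (fun a b : A => r ↑a ↑b)
      ≤ ∑' n, (μ.comap (Subtype.val : A → X)) ((Ψ n).dom) :=
        iInf_le _ (⟨Ψ, hgraph⟩ : {Ψ' : ℕ → PartialIso A _ // IsGraphing Ψ'})
    _ = ∑' n, μ ((psi Φ A hmA (e n).1 (e n).2.1 (e n).2.2).s) := by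
        refine tsum_congr fun n => ?_
        rw [hΨdef]
        exact subIso_dom_measure A hmA _ _ _ _ μ
    _ = ∑' ι : ℕ × (Word × Word), μ ((psi Φ A hmA ι.1 ι.2.1 ι.2.2).s) :=
        e.tsum_eq fun ι : ℕ × (Word × Word) => μ ((psi Φ A hmA ι.1 ι.2.1 ι.2.2).s)
    _ = ∑' ι : ℕ × (Word × Word), μ (Epiece Φ A ι.1 ι.2.1 ι.2.2) := by
        refine tsum_congr fun ι => ?_
        show μ (DomSet Φ A ι.1 ι.2.1 ι.2.2) = _
        rw [DomSet]
        exact measure_image_eq hr (wordBij Φ ι.2.1) (wordBij_graphIn he Φ ι.2.1)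
          (Epiece_meas Φ A hmA ι.1 ι.2.1 ι.2.2) (Epiece_subset Φ A ι.1 ι.2.1 ι.2.2)
    _ = ∑' i : ℕ, ∑' p : Word × Word, μ (Epiece Φ A i p.1 p.2) := ENNReal.tsum_prod'
    _ ≤ ∑' i : ℕ, μ ((Φ i).dom) := by
        refine ENNReal.tsum_le_tsum fun i => ?_
        have hdisj : Pairwise (Function.onFun Disjoint fun p : Word × Word => Epiece Φ A i p.1 p.2) := by
          intro p q hpq
          refine Set.disjoint_left.mpr fun x hxp hxq => ?_
          apply hpq
          have h1 : p.1 = q.1 := CC_unique Φ A p.1 q.1 x hxp.1 hxq.1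
          have h2 : p.2 = q.2 := CC_unique Φ A p.2 q.2 ((Φ i).toFun x) hxp.2.2 hxq.2.2
          exact Prod.ext h1 h2
        have hmeas : ∀ p : Word × Word, MeasurableSet (Epiece Φ A i p.1 p.2) :=
          fun p => Epiece_meas Φ A hmA i p.1 p.2
        rw [← measure_iUnion hdisj hmeas]
        exact measure_mono (Set.iUnion_subset fun p x hx => hx.2.1)

end MainLemma

/-- The cost of the restriction of a standard equivalence relation to a positive measure
subset is at most the cost of the relation. -/
theorem cost_restrict_le {X : Type*} [MeasurableSpace X] [StandardBorelSpace X]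
    (μ : Measure X) [IsProbabilityMeasure μ] (r : X → X → Prop)
    (hr : IsStdEqRel μ r) (A : Set X) (hmeasA : MeasurableSet A) (hA : 0 < μ A) :
    cost (μ.comap (Subtype.val : A → X)) (fun a b : A => r ↑a ↑b) ≤ cost μ r :=
  le_iInf fun Φ => cost_le_of_graphing hr A hmeasA Φ.1 Φ.2


end Paper
end

section
/- In the setup of the main theorem (M an oriented closed connected n-manifold with infinite fundamental group Γ, α = Γ ↷ (X,μ) an essentially free ergodic standard Γ-space with orbit relation S, and c = Σ_{j=1}^m f_j ⊗ σ_j an α-parametrised fundamental cycle in reduced form with lifts satisfying σ_j(v₀) ∈ D for a relatively compact fundamental domain D), define γ_j ∈ Γ by σ_j(v₁) ∈ γ_j·D and partial automorphisms φ_j : supp f_j → γ_j⁻¹·(supp f_j), x ↦ γ_j⁻¹·x. Then the equivalence relation R generated by φ₁,…,φ_m is a subrelation of S and cost_μ(R) ≤ Σ_{j=1}^m μ(supp f_j) ≤ |c|₁. -/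
open MeasureTheory ENNReal

namespace Paper

open MeasureTheory ENNReal
open scoped Classical

/-- The topological standard simplex associated with `x : SimplexCategory`
(the older Mathlib definition `SimplexCategory.toTopObj`). -/
def SimplexCategory.toTopObj (x : SimplexCategory) : Set (Fin (x.len + 1) → NNReal) :=
  {f | ∑ i, f i = 1}

/-- The map between topological standard simplices induced by a morphism
(the older Mathlib definition `SimplexCategory.toTopMap`). -/
def SimplexCategory.toTopMap {x y : SimplexCategory} (f : x ⟶ y)
    (g : SimplexCategory.toTopObj x) : SimplexCategory.toTopObj y :=
  ⟨fun i => ∑ j ∈ Finset.univ.filter (fun j => f.toOrderHom j = i), g.1 j, by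
    simp only [SimplexCategory.toTopObj, Set.mem_ofPred_eq]
    rw [← Finset.sum_biUnion]
    · have hg := g.2
      simp only [SimplexCategory.toTopObj, Set.mem_ofPred_eq] at hg
      convert hg
      ext j
      simp
    · intro i _ k _ hik
      rw [Function.onFun, Finset.disjoint_iff_ne]
      intro a ha b hb hab
      simp only [Finset.mem_filter] at ha hb
      exact hik (ha.2.symm.trans (hab ▸ hb.2))⟩

theorem SimplexCategory.continuous_toTopMap {x y : SimplexCategory} (f : x ⟶ y) :
    Continuous (SimplexCategory.toTopMap f) := by
  refine Continuous.subtype_mk (continuous_pi fun i => ?_) _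
  exact continuous_finsetSum _ fun j _ =>
    (continuous_apply j).comp continuous_subtype_val

/-- Singular `n`-simplices in a space `N`. -/
abbrev SSimplex (n : ℕ) (N : Type*) [TopologicalSpace N] : Type _ :=
  C(SimplexCategory.toTopObj (SimplexCategory.mk n), N)

/-- The `k`-th face of a singular `(n+1)`-simplex. -/
noncomputable def faceMap {N : Type*} [TopologicalSpace N] {n : ℕ} (k : Fin (n + 2))
    (σ : SSimplex (n + 1) N) : SSimplex n N :=
  σ.comp ⟨SimplexCategory.toTopMap (SimplexCategory.δ k),
    SimplexCategory.continuous_toTopMap _⟩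

/-- The `i`-th vertex of the topological standard simplex. -/
noncomputable def vertex {n : ℕ} (i : Fin (n + 1)) :
    SimplexCategory.toTopObj (SimplexCategory.mk n) :=
  ⟨fun j => if j = i then 1 else 0, by
    simp only [SimplexCategory.toTopObj, Set.mem_setOf_eq]
    exact (Finset.sum_eq_single_of_mem i (Finset.mem_univ i) fun b _ hb => if_neg hb).trans (if_pos rfl)⟩

/-- The coefficient of `τ` in the boundary of the chain with coefficients `c`. -/
noncomputable def bdryCoeff {N : Type*} [TopologicalSpace N] {Z : Type*} [CommRing Z]
    {n : ℕ} (c : SSimplex (n + 1) N → Z) (τ : SSimplex n N) : Z :=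
  ∑ᶠ σ : SSimplex (n + 1) N,
    ∑ k : Fin (n + 2), if faceMap k σ = τ then ((-1 : ℤ) ^ (k : ℕ)) • c σ else 0

/-- Locally finite singular chains with coefficients in `Z`. -/
structure LFChain (n : ℕ) (N : Type*) [TopologicalSpace N] (Z : Type*) [CommRing Z] where
  coeff : SSimplex n N → Z
  locFin : ∀ K : Set N, IsCompact K →
    {σ : SSimplex n N | coeff σ ≠ 0 ∧ (Set.range σ ∩ K).Nonempty}.Finite

/-- A locally finite chain is a cycle if its boundary vanishes (in degree 0 there is
no condition). -/
def IsLFCycle {N : Type*} [TopologicalSpace N] {Z : Type*} [CommRing Z] :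
    ∀ {n : ℕ}, LFChain n N Z → Prop
  | 0, _ => True
  | _ + 1, c => ∀ τ, bdryCoeff c.coeff τ = 0

/-- A coefficient function is a locally finite boundary. -/
def IsLFBoundary {N : Type*} [TopologicalSpace N] {Z : Type*} [CommRing Z] {n : ℕ}
    (f : SSimplex n N → Z) : Prop :=
  ∃ b : LFChain (n + 1) N Z, ∀ τ, f τ = bdryCoeff b.coeff τ

/-- Restriction of a locally finite chain at a point `x`: keep only the simplices whose
image contains `x`; this is a finite chain. -/
noncomputable def restr {N : Type*} [TopologicalSpace N] {Z : Type*} [CommRing Z]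
    {n : ℕ} (x : N) (c : LFChain n N Z) : SSimplex n N →₀ Z :=
  Finsupp.onFinset (c.locFin {x} isCompact_singleton).toFinset
    (fun σ => if x ∈ Set.range σ then c.coeff σ else 0)
    (by
      intro σ h
      rw [Set.Finite.mem_toFinset]
      by_cases hx : x ∈ Set.range σ
      · simp only [if_pos hx] at h
        exact ⟨h, ⟨x, hx, rfl⟩⟩
      · simp only [if_neg hx, ne_eq, not_true_eq_false] at h)

/-- Restriction of a finite chain at a point `x`. -/
noncomputable def finRestr {N : Type*} [TopologicalSpace N] {Z : Type*} [CommRing Z]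
    {n : ℕ} (x : N) (w : SSimplex n N →₀ Z) : SSimplex n N →₀ Z :=
  Finsupp.onFinset w.support
    (fun σ => if x ∈ Set.range σ then w σ else 0)
    (by
      intro σ h
      by_cases hx : x ∈ Set.range σ
      · simp only [if_pos hx] at h
        exact Finsupp.mem_support_iff.mpr h
      · simp only [if_neg hx, ne_eq, not_true_eq_false] at h)

/-- A finite chain is a relative cycle relative to `N \ {x}`: its boundary is supported
on simplices avoiding `x`. -/
def IsRelCycle {N : Type*} [TopologicalSpace N] {Z : Type*} [CommRing Z] :
    ∀ {n : ℕ}, N → (SSimplex n N →₀ Z) → Prop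
  | 0, _, _ => True
  | m + 1, x, c => ∀ τ : SSimplex m N, x ∈ Set.range (⇑τ) → bdryCoeff (⇑c) τ = 0

/-- Two finite chains are homologous relative to `N \ {x}`. -/
def RelHomologous {N : Type*} [TopologicalSpace N] {Z : Type*} [CommRing Z] {n : ℕ}
    (x : N) (c c' : SSimplex n N →₀ Z) : Prop :=
  ∃ b : SSimplex (n + 1) N →₀ Z, ∀ τ : SSimplex n N, x ∈ Set.range (⇑τ) → c τ - c' τ = bdryCoeff (⇑b) τ

/-- A relative cycle `c` generates the local homology `H_n(N, N \ {x}; Z) ≅ Z`. -/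
def IsLocalGenerator {N : Type*} [TopologicalSpace N] {Z : Type*} [CommRing Z] {n : ℕ}
    (x : N) (c : SSimplex n N →₀ Z) : Prop :=
  IsRelCycle x c ∧
    ∀ d : SSimplex n N →₀ Z, IsRelCycle x d → ∃! a : Z, RelHomologous x d (a • c)

/-- A locally finite fundamental cycle: a locally finite cycle whose restriction at every
point generates the local homology. This encodes (a representative of) the locally finite
fundamental class of an oriented manifold. -/
def IsLFFundamentalClass {N : Type*} [TopologicalSpace N] {Z : Type*} [CommRing Z]
    {n : ℕ} (c : LFChain n N Z) : Prop :=
  IsLFCycle c ∧ ∀ x : N, IsLocalGenerator x (restr x c)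

/-- A finite chain is a cycle. -/
def IsFinCycle {N : Type*} [TopologicalSpace N] {Z : Type*} [CommRing Z] :
    ∀ {n : ℕ}, (SSimplex n N →₀ Z) → Prop
  | 0, _ => True
  | _ + 1, w => ∀ τ, bdryCoeff (⇑w) τ = 0

/-- A fundamental cycle of a closed manifold: a finite cycle whose restriction at every
point generates the local homology. -/
def IsFinFundCycle {N : Type*} [TopologicalSpace N] {Z : Type*} [CommRing Z] {n : ℕ}
    (w : SSimplex n N →₀ Z) : Prop :=
  IsFinCycle w ∧ ∀ x : N, IsLocalGenerator x (finRestr x w)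


open MeasureTheory ENNReal
open scoped Classical

/-- A parametrised chain: an element of `L^∞(X, Z) ⊗_{ZΓ} C_n(M̃; Z)`, encoded as a
`Γ`-equivariant family of bounded measurable `Z`-valued coefficient functions indexed by
the singular simplices of the universal cover, supported on finitely many `Γ`-orbits. -/
structure ParamChain (n : ℕ) (Γ : Type*) [Group Γ] (Mt : Type*) [TopologicalSpace Mt]
    [MulAction Γ Mt] [ContinuousConstSMul Γ Mt]
    (X : Type*) [MeasurableSpace X] [MulAction Γ X] (Z : Type*) [CommRing Z] where
  coeff : SSimplex n Mt → X → Z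
  measurable_level : ∀ σ z, MeasurableSet {x | coeff σ x = z}
  finiteRange : ∀ σ, (Set.range (coeff σ)).Finite
  equivariant : ∀ (γ : Γ) σ x, coeff (γ • σ) x = coeff σ (γ⁻¹ • x)
  orbitFinite : ∃ s : Finset (SSimplex n Mt),
    ∀ σ, coeff σ ≠ 0 → ∃ τ ∈ s, ∃ γ : Γ, σ = γ • τ

variable {n : ℕ} {Γ : Type*} [Group Γ] {Mt : Type*} [TopologicalSpace Mt]
  [MulAction Γ Mt] [ContinuousConstSMul Γ Mt]
  {X : Type*} [MeasurableSpace X] [MulAction Γ X] {Z : Type*} [CommRing Z]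

/-- The coefficient of the boundary of a parametrised chain. -/
noncomputable def pbdryCoeff (b : ParamChain (n + 1) Γ Mt X Z)
    (σ : SSimplex n Mt) (x : X) : Z :=
  ∑ᶠ τ : SSimplex (n + 1) Mt,
    ∑ k : Fin (n + 2), if faceMap k τ = σ then ((-1 : ℤ) ^ (k : ℕ)) • b.coeff τ x else 0

/-- A parametrised chain is a cycle. -/
def IsParamCycle : ∀ {n : ℕ}, ParamChain n Γ Mt X Z → Prop
  | 0, _ => True
  | _ + 1, c => ∀ σ x, pbdryCoeff c σ x = 0

/-- Two parametrised chains are homologous. -/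
def ParamHomologous (c c' : ParamChain n Γ Mt X Z) : Prop :=
  ∃ b : ParamChain (n + 1) Γ Mt X Z, ∀ σ x, c.coeff σ x - c'.coeff σ x = pbdryCoeff b σ x

/-- A parametrised fundamental cycle: a parametrised cycle homologous to the image of a
`Z`-fundamental cycle of `M` under the canonical inclusion. -/
def IsParamFundCycle {M : Type*} [TopologicalSpace M] (p : C(Mt, M))
    (c : ParamChain n Γ Mt X Z) : Prop :=
  IsParamCycle c ∧
    ∃ w : SSimplex n M →₀ Z, IsFinFundCycle w ∧
      ∃ c₀ : ParamChain n Γ Mt X Z,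
        (∀ σ x, c₀.coeff σ x = w (p.comp σ)) ∧ ParamHomologous c c₀

/-- The `ℓ¹`-norm (in reduced form) of a parametrised integral chain: the sum over the
`Γ`-orbits of simplices of the integral of the absolute value of the coefficient function. -/
noncomputable def paramNorm (μ : Measure X) (c : ParamChain n Γ Mt X ℤ) : ℝ≥0∞ :=
  ∑' o : Quotient (MulAction.orbitRel Γ (SSimplex n Mt)),
    sSup {r : ℝ≥0∞ | ∃ σ : SSimplex n Mt,
      Quotient.mk (MulAction.orbitRel Γ (SSimplex n Mt)) σ = o ∧
      r = ∫⁻ x, ((c.coeff σ x).natAbs : ℝ≥0∞) ∂μ}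

/-- The weightless norm of a parametrised chain: the sum over the `Γ`-orbits of simplices
of the measure of the support of the coefficient function. -/
noncomputable def weightlessNorm (μ : Measure X) (c : ParamChain n Γ Mt X Z) : ℝ≥0∞ :=
  ∑' o : Quotient (MulAction.orbitRel Γ (SSimplex n Mt)),
    sSup {r : ℝ≥0∞ | ∃ σ : SSimplex n Mt,
      Quotient.mk (MulAction.orbitRel Γ (SSimplex n Mt)) σ = o ∧
      r = μ {x | c.coeff σ x ≠ 0}}

/-- The `α`-parametrised simplicial volume: the infimal `ℓ¹`-norm of parametrised
fundamental cycles. -/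
noncomputable def paramSV (n : ℕ) (Γ : Type*) [Group Γ] (Mt : Type*) [TopologicalSpace Mt]
    [MulAction Γ Mt] [ContinuousConstSMul Γ Mt] (M : Type*) [TopologicalSpace M]
    (p : C(Mt, M)) (X : Type*) [MeasurableSpace X] [MulAction Γ X]
    (μ : Measure X) : ℝ≥0∞ :=
  ⨅ c : {c : ParamChain n Γ Mt X ℤ // IsParamFundCycle p c}, paramNorm μ c.1

/-- The weightless `(α; Z)`-parametrised simplicial volume. -/
noncomputable def weightlessSV (n : ℕ) (Γ : Type*) [Group Γ] (Mt : Type*)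
    [TopologicalSpace Mt] [MulAction Γ Mt] [ContinuousConstSMul Γ Mt] (M : Type*)
    [TopologicalSpace M] (p : C(Mt, M)) (X : Type*) [MeasurableSpace X] [MulAction Γ X]
    (μ : Measure X) (Z : Type*) [CommRing Z] : ℝ≥0∞ :=
  ⨅ c : {c : ParamChain n Γ Mt X Z // IsParamFundCycle p c}, weightlessNorm μ c.1

/-- A standard `Γ`-space: a standard Borel probability space with a measurable
measure-preserving `Γ`-action. -/
structure StdGammaSpace (Γ : Type*) [Group Γ] where
  carrier : Type
  mX : MeasurableSpace carrier
  std : @StandardBorelSpace carrier mX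
  act : MulAction Γ carrier
  μ : @Measure carrier mX
  prob : @IsProbabilityMeasure carrier mX μ
  pres : ∀ γ : Γ, @MeasurePreserving carrier carrier mX mX
    (fun x => @SMul.smul Γ carrier act.toSMul γ x) μ μ

/-- The orbit relation of a standard `Γ`-space. -/
def StdGammaSpace.orbitRel {Γ : Type*} [Group Γ] (α : StdGammaSpace Γ) :
    α.carrier → α.carrier → Prop :=
  fun x y => ∃ γ : Γ, y = @SMul.smul Γ α.carrier α.act.toSMul γ x

/-- The cost of a standard `Γ`-space. -/
noncomputable def StdGammaSpace.cost {Γ : Type*} [Group Γ] (α : StdGammaSpace Γ) :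
    ℝ≥0∞ := by
  letI := α.mX
  exact Paper.cost α.μ α.orbitRel

/-- The cost of a group: the infimum of the costs of its standard `Γ`-spaces. -/
noncomputable def groupCost (Γ : Type*) [Group Γ] : ℝ≥0∞ :=
  ⨅ α : StdGammaSpace Γ, α.cost

/-- The parametrised simplicial volume of a standard `Γ`-space. -/
noncomputable def StdGammaSpace.paramSV {Γ : Type*} [Group Γ] (α : StdGammaSpace Γ)
    (n : ℕ) (Mt : Type*) [TopologicalSpace Mt] [MulAction Γ Mt]
    [ContinuousConstSMul Γ Mt] (M : Type*) [TopologicalSpace M] (p : C(Mt, M)) :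
    ℝ≥0∞ := by
  letI := α.mX
  letI := α.act
  exact Paper.paramSV n Γ Mt M p α.carrier α.μ

/-- The integral foliated simplicial volume: the infimum of the parametrised simplicial
volumes over all standard `Γ`-spaces. -/
noncomputable def ifsv (n : ℕ) (Γ : Type*) [Group Γ] (Mt : Type*) [TopologicalSpace Mt]
    [MulAction Γ Mt] [ContinuousConstSMul Γ Mt] (M : Type*) [TopologicalSpace M]
    (p : C(Mt, M)) : ℝ≥0∞ :=
  ⨅ α : StdGammaSpace Γ, α.paramSV n Mt M p


open MeasureTheory ENNReal
open scoped Pointwise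

/-- In the setup of the main theorem, the relation `R` generated by the partial
translations `φ_j : supp f_j → γ_j⁻¹ · supp f_j` associated with a parametrised
fundamental cycle in reduced form is a subrelation of the orbit relation `S` and
`cost_μ(R) ≤ Σ_j μ(supp f_j) ≤ |c|₁`. -/
theorem cost_genRel_le_norm
    (n : ℕ) (M : Type) [TopologicalSpace M] [T2Space M]
    [ChartedSpace (EuclideanSpace ℝ (Fin n)) M] [CompactSpace M] [ConnectedSpace M]
    (horient : ∃ w : SSimplex n M →₀ ℤ, IsFinFundCycle w)
    (Γ : Type) [Group Γ] [Countable Γ] (hΓ : Infinite Γ)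
    (Mt : Type) [TopologicalSpace Mt] [SimplyConnectedSpace Mt]
    [MulAction Γ Mt] [ContinuousConstSMul Γ Mt]
    (p : C(Mt, M)) (hcov : IsCoveringMap ⇑p)
    (hdeck : ∀ (γ : Γ) (y : Mt), p (γ • y) = p y)
    (hfree : ∀ (γ : Γ) (y : Mt), γ • y = y → γ = 1)
    (htrans : ∀ y z : Mt, p y = p z → ∃ γ : Γ, γ • y = z)
    (X : Type) [MeasurableSpace X] [StandardBorelSpace X]
    (μ : Measure X) [IsProbabilityMeasure μ] [MulAction Γ X]
    (hpres : ∀ γ : Γ, MeasurePreserving (fun x : X => γ • x) μ μ)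
    (hessfree : ∀ᵐ x ∂μ, ∀ γ : Γ, γ ≠ 1 → γ • x ≠ x)
    (herg : IsErgodicRel μ fun x y : X => ∃ γ : Γ, y = γ • x)
    -- D is a relatively compact set-theoretic fundamental domain
    (D : Set Mt) (hDcpt : IsCompact (closure D))
    (hDfund : ∀ y : Mt, ∃! γ : Γ, y ∈ γ • D)
    -- c = Σ_j f_j ⊗ σ_j is a parametrised fundamental cycle in reduced form
    (m : ℕ) (f : Fin m → X → ℤ) (σ : Fin m → SSimplex n Mt)
    (c : ParamChain n Γ Mt X ℤ) (hcfund : IsParamFundCycle p c)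
    (hcoeff : ∀ (j) (γ : Γ) (x), c.coeff (γ • σ j) x = f j (γ⁻¹ • x))
    (hsupp : ∀ τ, c.coeff τ ≠ 0 → ∃ j, ∃ γ : Γ, τ = γ • σ j)
    (hred : ∀ i j (γ : Γ), γ • σ i = σ j → i = j)
    (hv0 : ∀ j, σ j (vertex 0) ∈ D)
    (γj : Fin m → Γ) (hγj : ∀ j, σ j (vertex 1) ∈ γj j • D)
    (R : X → X → Prop)
    (hR : R = Relation.EqvGen fun x y => ∃ j, f j x ≠ 0 ∧ y = (γj j)⁻¹ • x) :
    (∀ x y, R x y → ∃ γ : Γ, y = γ • x) ∧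
      cost μ R ≤ ∑ j, μ {x | f j x ≠ 0} ∧
      ∑ j, μ {x | f j x ≠ 0} ≤ ∑ j, ∫⁻ x, ((f j x).natAbs : ℝ≥0∞) ∂μ := by
  have hfc : ∀ (j : Fin m) (x : X), f j x = c.coeff (σ j) x := by
    intro j x
    have := hcoeff j 1 x
    simpa using this.symm
  have hfmeas : ∀ j : Fin m, MeasurableSet {x | f j x ≠ 0} := by
    intro j
    have : {x | f j x ≠ 0} = {x | c.coeff (σ j) x = 0}ᶜ := by
      ext x; simp [hfc]
    rw [this]
    exact (c.measurable_level (σ j) 0).compl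
  have hrel : ∀ (j : Fin m) (x : X), f j x ≠ 0 → R x ((γj j)⁻¹ • x) := by
    intro j x hx
    rw [hR]
    exact Relation.EqvGen.rel _ _ ⟨j, hx, rfl⟩
  refine ⟨?_, ?_, ?_⟩
  · intro x y hxy
    rw [hR] at hxy
    induction hxy with
    | rel a b h =>
      obtain ⟨j, _, hb⟩ := h
      exact ⟨(γj j)⁻¹, hb⟩
    | refl a => exact ⟨1, (one_smul _ _).symm⟩
    | symm a b _ ih =>
      obtain ⟨γ, hγ⟩ := ih
      exact ⟨γ⁻¹, by rw [hγ, inv_smul_smul]⟩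
    | trans a b z _ _ ih1 ih2 =>
      obtain ⟨γ, h1⟩ := ih1
      obtain ⟨δ, h2⟩ := ih2
      exact ⟨δ * γ, by rw [h2, h1, mul_smul]⟩
  · -- cost bound
    let Φ : ℕ → PartialIso X R := fun i =>
      if h : i < m then
        { dom := {x | f ⟨i, h⟩ x ≠ 0}
          toFun := fun x => (γj ⟨i, h⟩)⁻¹ • x
          dom_meas := hfmeas _
          meas := (hpres _).measurable
          injOn := fun x _ y _ hxy => smul_left_cancel _ hxy
          image_meas := by
            have heq : (fun x => (γj ⟨i, h⟩)⁻¹ • x) '' {x | f ⟨i, h⟩ x ≠ 0}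
                = (fun x => (γj ⟨i, h⟩) • x) ⁻¹' {x | f ⟨i, h⟩ x ≠ 0} := by
              ext y
              constructor
              · rintro ⟨a, ha, rfl⟩; simpa using ha
              · intro hy; exact ⟨γj ⟨i, h⟩ • y, hy, inv_smul_smul (γj ⟨i, h⟩) y⟩
            rw [heq]
            exact (hpres _).measurable (hfmeas _)
          mem_rel := fun x hx => hrel _ x hx }
      else
        { dom := ∅
          toFun := id
          dom_meas := .empty
          meas := measurable_id
          injOn := Set.injOn_empty _
          image_meas := by simpa using MeasurableSet.empty
          mem_rel := fun x hx => absurd hx (Set.notMem_empty x) }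
    have hΦpos : ∀ (i : ℕ) (h : i < m),
        (Φ i).dom = {x | f ⟨i, h⟩ x ≠ 0} ∧
          (Φ i).toFun = fun x => (γj ⟨i, h⟩)⁻¹ • x := by
      intro i h
      simp only [Φ, dif_pos h]
      exact ⟨trivial, trivial⟩
    have hΦneg : ∀ (i : ℕ), ¬ i < m → (Φ i).dom = ∅ := by
      intro i h
      simp only [Φ, dif_neg h]
    have hbase : ∀ a b : X,
        (∃ i, a ∈ (Φ i).dom ∧ b = (Φ i).toFun a) ↔
          (∃ j : Fin m, f j a ≠ 0 ∧ b = (γj j)⁻¹ • a) := by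
      intro a b
      constructor
      · rintro ⟨i, hdom, hb⟩
        by_cases h : i < m
        · obtain ⟨hd, ht⟩ := hΦpos i h
          rw [hd] at hdom
          rw [ht] at hb
          exact ⟨⟨i, h⟩, hdom, hb⟩
        · rw [hΦneg i h] at hdom
          exact absurd hdom (Set.notMem_empty a)
      · rintro ⟨j, hj, hb⟩
        refine ⟨j.val, ?_, ?_⟩
        · rw [(hΦpos j.val j.isLt).1]
          simpa [Fin.eta] using hj
        · rw [(hΦpos j.val j.isLt).2]
          simpa [Fin.eta] using hb
    have hgraph : IsGraphing Φ := by
      intro x y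
      constructor
      · intro h
        rw [hR] at h
        exact Relation.EqvGen.mono (fun a b hab => (hbase a b).mpr hab) _ _ h
      · intro h
        rw [hR]
        exact Relation.EqvGen.mono (fun a b hab => (hbase a b).mp hab) _ _ h
    have hle : cost μ R ≤ ∑' i, μ ((Φ i).dom) :=
      iInf_le (fun Ψ : {Ψ : ℕ → PartialIso X R // IsGraphing Ψ} => ∑' i, μ ((Ψ.1 i).dom))
        ⟨Φ, hgraph⟩
    refine hle.trans_eq ?_
    have h1 : ∑' i, μ ((Φ i).dom) = ∑ i ∈ Finset.range m, μ ((Φ i).dom) := by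
      refine tsum_eq_sum ?_
      intro i hi
      rw [hΦneg i (by simpa using hi)]
      simp
    rw [h1, ← Fin.sum_univ_eq_sum_range (fun i => μ ((Φ i).dom)) m]
    refine Finset.sum_congr rfl ?_
    intro j _
    rw [(hΦpos j.val j.isLt).1]
  · refine Finset.sum_le_sum ?_
    intro j _
    have h1 : μ {x | f j x ≠ 0}
        = ∫⁻ x, {x | f j x ≠ 0}.indicator (fun _ => (1 : ℝ≥0∞)) x ∂μ :=
      (lintegral_indicator_one (hfmeas j)).symm
    rw [h1]
    refine lintegral_mono ?_
    intro x
    by_cases hx : f j x ≠ 0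
    · have : (1 : ℕ) ≤ (f j x).natAbs := Nat.one_le_iff_ne_zero.mpr (Int.natAbs_ne_zero.mpr hx)
      simpa [Set.indicator, hx] using (by exact_mod_cast this : (1 : ℝ≥0∞) ≤ ((f j x).natAbs : ℝ≥0∞))
    · simp [Set.indicator, hx]


end Paper
end
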